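/- For every fixed real y > 0, the function x ↦ Φ(x, y) is monotone increasing on (0, ∞): for all 0 < x₁ ≤ x₂ one has Φ(x₁, y) ≤ Φ(x₂, y). -/

import Mathlib

/-- The function `𝓕(x, y) = (√(x(1+√y)² + 1) − √(x(1−√y)² + 1))²`. -/
noncomputable def Fcal (x y : ℝ) : ℝ :=
  (Real.sqrt (x * (1 + Real.sqrt y) ^ 2 + 1) - Real.sqrt (x * (1 - Real.sqrt y) ^ 2 + 1)) ^ 2

/-- The Verdú–Shamai asymptotic per-antenna MIMO capacity formula
`Φ(x, y) = y·log₂(1 + x − 𝓕(x,y)/4) + log₂(1 + x·y − 𝓕(x,y)/4) − (log₂ e)·𝓕(x,y)/(4x)`. -/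
noncomputable def Phi (x y : ℝ) : ℝ :=
  y * Real.logb 2 (1 + x - Fcal x y / 4) + Real.logb 2 (1 + x * y - Fcal x y / 4)
    - Real.logb 2 (Real.exp 1) * Fcal x y / (4 * x)

/-- Auxiliary: the "nats" version of `Phi`. -/
noncomputable def Gfun (y x : ℝ) : ℝ :=
  y * Real.log (1 + x - Fcal x y / 4) + Real.log (1 + x * y - Fcal x y / 4)
    - Fcal x y / (4 * x)

lemma Phi_eq_G (x y : ℝ) : Phi x y = Gfun y x / Real.log 2 := by
  unfold Phi Gfun Real.logb
  rw [Real.log_exp]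
  ring

lemma alpha_pos {x r a b : ℝ} (hx : 0 < x) (ha : 0 < a) (hb : 0 < b)
    (ha2 : a ^ 2 = x * (1 + r) ^ 2 + 1) (hb2 : b ^ 2 = x * (1 - r) ^ 2 + 1) :
    0 < 1 + x - (a - b) ^ 2 / 4 := by
  nlinarith [sq_nonneg (a * b - (x * (r ^ 2 - 1) - 1)), mul_pos ha hb,
    sq_nonneg (a - b), sq_nonneg (a + b), sq_nonneg (x * r)]

lemma beta_pos {x r a b : ℝ} (hx : 0 < x) (ha : 0 < a) (hb : 0 < b)
    (ha2 : a ^ 2 = x * (1 + r) ^ 2 + 1) (hb2 : b ^ 2 = x * (1 - r) ^ 2 + 1) :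
    0 < 1 + x * r ^ 2 - (a - b) ^ 2 / 4 := by
  nlinarith [sq_nonneg (a * b - (x * (1 - r ^ 2) - 1)), mul_pos ha hb,
    sq_nonneg (a - b), sq_nonneg (a + b), sq_nonneg (x * r)]

/-- The core algebraic identity in terms of `s = a*b`. -/
lemma key2 {x r s A B : ℝ} (hx : x ≠ 0) (hs : s ≠ 0) (hA0 : A ≠ 0) (hB0 : B ≠ 0)
    (hs2 : s ^ 2 = x ^ 2 * (1 - r ^ 2) ^ 2 + 2 * x * (1 + r ^ 2) + 1)
    (hA : A = 1 + x - (2 * x * (1 + r ^ 2) + 2 - 2 * s) / 4)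
    (hB : B = 1 + x * r ^ 2 - (2 * x * (1 + r ^ 2) + 2 - 2 * s) / 4) :
    r ^ 2 * (A⁻¹ * (1 - 2 * ((1 + r ^ 2) * (s - 1) - x * (1 - r ^ 2) ^ 2) / s / 4))
      + B⁻¹ * (r ^ 2 - 2 * ((1 + r ^ 2) * (s - 1) - x * (1 - r ^ 2) ^ 2) / s / 4)
      - (2 * ((1 + r ^ 2) * (s - 1) - x * (1 - r ^ 2) ^ 2) / s * (4 * x)
          - (2 * x * (1 + r ^ 2) + 2 - 2 * s) * 4) / (4 * x) ^ 2
    = r ^ 2 / (A * B) := by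
  field_simp
  rw [hA, hB]
  linear_combination (-s/2 - s^2/2 - x/2 - x*r^2/2 - x^2/2 + x^2*r^2 - x^2*r^4/2) * hs2

/-- The derivative identity, in raw form. -/
lemma key_identity {x r a b A B : ℝ} (hx : 0 < x) (ha : 0 < a) (hb : 0 < b)
    (hA0 : A ≠ 0) (hB0 : B ≠ 0)
    (hA : A = 1 + x - (a - b) ^ 2 / 4) (hB : B = 1 + x * r ^ 2 - (a - b) ^ 2 / 4)
    (ha2 : a ^ 2 = x * (1 + r) ^ 2 + 1) (hb2 : b ^ 2 = x * (1 - r) ^ 2 + 1) :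
    r ^ 2 * (A⁻¹ *
        (1 - 2 * (a - b) ^ 1 * (1 / (2 * a) * (1 + r) ^ 2 - 1 / (2 * b) * (1 - r) ^ 2) / 4))
      + B⁻¹ *
        (r ^ 2 - 2 * (a - b) ^ 1 * (1 / (2 * a) * (1 + r) ^ 2 - 1 / (2 * b) * (1 - r) ^ 2) / 4)
      - (2 * (a - b) ^ 1 * (1 / (2 * a) * (1 + r) ^ 2 - 1 / (2 * b) * (1 - r) ^ 2) * (4 * x)
          - (a - b) ^ 2 * 4) / (4 * x) ^ 2
    = r ^ 2 / (A * B) := by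
  have hs0 : a * b ≠ 0 := (mul_pos ha hb).ne'
  have hs2 : (a * b) ^ 2 = x ^ 2 * (1 - r ^ 2) ^ 2 + 2 * x * (1 + r ^ 2) + 1 := by
    linear_combination b ^ 2 * ha2 + (1 + x + 2 * x * r + x * r ^ 2) * hb2
  have hW : 2 * (a - b) ^ 1 * (1 / (2 * a) * (1 + r) ^ 2 - 1 / (2 * b) * (1 - r) ^ 2)
      = 2 * ((1 + r ^ 2) * (a * b - 1) - x * (1 - r ^ 2) ^ 2) / (a * b) := by
    field_simp
    linear_combination (-(1 - r) ^ 2) * ha2 + (-(1 + r) ^ 2) * hb2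
  have hF : (a - b) ^ 2 = 2 * x * (1 + r ^ 2) + 2 - 2 * (a * b) := by
    linear_combination ha2 + hb2
  rw [hF] at hA hB
  rw [hW, hF]
  exact key2 hx.ne' hs0 hA0 hB0 hs2 hA hB

lemma alphaF_pos {y : ℝ} (hy : 0 < y) {x : ℝ} (hx : 0 < x) :
    0 < 1 + x - Fcal x y / 4 := by
  set r := Real.sqrt y with hrdef
  have hua : (0:ℝ) < x * (1 + r) ^ 2 + 1 := by positivity
  have hub : (0:ℝ) < x * (1 - r) ^ 2 + 1 := by positivity
  have ha : 0 < Real.sqrt (x * (1 + r) ^ 2 + 1) := Real.sqrt_pos.mpr hua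
  have hb : 0 < Real.sqrt (x * (1 - r) ^ 2 + 1) := Real.sqrt_pos.mpr hub
  exact alpha_pos hx ha hb (Real.sq_sqrt hua.le) (Real.sq_sqrt hub.le)

lemma betaF_pos {y : ℝ} (hy : 0 < y) {x : ℝ} (hx : 0 < x) :
    0 < 1 + x * y - Fcal x y / 4 := by
  set r := Real.sqrt y with hrdef
  have hry : r ^ 2 = y := Real.sq_sqrt hy.le
  have hua : (0:ℝ) < x * (1 + r) ^ 2 + 1 := by positivity
  have hub : (0:ℝ) < x * (1 - r) ^ 2 + 1 := by positivity
  have ha : 0 < Real.sqrt (x * (1 + r) ^ 2 + 1) := Real.sqrt_pos.mpr hua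
  have hb : 0 < Real.sqrt (x * (1 - r) ^ 2 + 1) := Real.sqrt_pos.mpr hub
  have := beta_pos hx ha hb (Real.sq_sqrt hua.le) (Real.sq_sqrt hub.le)
  rw [hry] at this
  exact this

lemma hasDerivAt_G {y : ℝ} (hy : 0 < y) {x : ℝ} (hx : 0 < x) :
    HasDerivAt (Gfun y)
      (y / ((1 + x - Fcal x y / 4) * (1 + x * y - Fcal x y / 4))) x := by
  set r := Real.sqrt y with hrdef
  have hry : r ^ 2 = y := Real.sq_sqrt hy.le
  have hua : (0:ℝ) < x * (1 + r) ^ 2 + 1 := by positivity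
  have hub : (0:ℝ) < x * (1 - r) ^ 2 + 1 := by positivity
  set a := Real.sqrt (x * (1 + r) ^ 2 + 1) with hadef
  set b := Real.sqrt (x * (1 - r) ^ 2 + 1) with hbdef
  have ha : 0 < a := Real.sqrt_pos.mpr hua
  have hb : 0 < b := Real.sqrt_pos.mpr hub
  have ha2 : a ^ 2 = x * (1 + r) ^ 2 + 1 := Real.sq_sqrt hua.le
  have hb2 : b ^ 2 = x * (1 - r) ^ 2 + 1 := Real.sq_sqrt hub.le
  have hαpos : 0 < 1 + x - Fcal x y / 4 := alphaF_pos hy hx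
  have hβpos : 0 < 1 + x * y - Fcal x y / 4 := betaF_pos hy hx
  -- inner linear functions
  have h1 : HasDerivAt (fun t : ℝ => t * (1 + r) ^ 2 + 1) ((1 + r) ^ 2) x := by
    simpa using ((hasDerivAt_id x).mul_const ((1 + r) ^ 2)).add_const 1
  have h2 : HasDerivAt (fun t : ℝ => t * (1 - r) ^ 2 + 1) ((1 - r) ^ 2) x := by
    simpa using ((hasDerivAt_id x).mul_const ((1 - r) ^ 2)).add_const 1
  have hsa : HasDerivAt (fun t : ℝ => Real.sqrt (t * (1 + r) ^ 2 + 1))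
      (1 / (2 * a) * (1 + r) ^ 2) x := by
    simpa [Function.comp_def, ← hadef] using (Real.hasDerivAt_sqrt hua.ne').comp x h1
  have hsb : HasDerivAt (fun t : ℝ => Real.sqrt (t * (1 - r) ^ 2 + 1))
      (1 / (2 * b) * (1 - r) ^ 2) x := by
    simpa [Function.comp_def, ← hbdef] using (Real.hasDerivAt_sqrt hub.ne').comp x h2
  have hF : HasDerivAt (fun t : ℝ => Fcal t y)
      (2 * (a - b) ^ 1 * (1 / (2 * a) * (1 + r) ^ 2 - 1 / (2 * b) * (1 - r) ^ 2)) x := by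
    have h := (hsa.sub hsb).pow 2
    simp only [Pi.sub_apply, ← hadef, ← hbdef] at h
    show HasDerivAt (fun t : ℝ => (Real.sqrt (t * (1 + r) ^ 2 + 1)
        - Real.sqrt (t * (1 - r) ^ 2 + 1)) ^ 2)
      (2 * (a - b) ^ 1 * (1 / (2 * a) * (1 + r) ^ 2 - 1 / (2 * b) * (1 - r) ^ 2)) x
    exact h.congr_deriv (by norm_num)
  have hα : HasDerivAt (fun t : ℝ => 1 + t - Fcal t y / 4)
      (1 - 2 * (a - b) ^ 1 * (1 / (2 * a) * (1 + r) ^ 2 - 1 / (2 * b) * (1 - r) ^ 2) / 4) x := by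
    simpa [Pi.sub_def] using ((hasDerivAt_id x).const_add 1).sub (hF.div_const 4)
  have hβ : HasDerivAt (fun t : ℝ => 1 + t * y - Fcal t y / 4)
      (y - 2 * (a - b) ^ 1 * (1 / (2 * a) * (1 + r) ^ 2 - 1 / (2 * b) * (1 - r) ^ 2) / 4) x := by
    have h := (((hasDerivAt_id x).mul_const y).const_add 1).sub (hF.div_const 4)
    refine h.congr_deriv ?_
    ring
  have hlogα : HasDerivAt (fun t : ℝ => Real.log (1 + t - Fcal t y / 4))
      ((1 + x - Fcal x y / 4)⁻¹ *
        (1 - 2 * (a - b) ^ 1 * (1 / (2 * a) * (1 + r) ^ 2 - 1 / (2 * b) * (1 - r) ^ 2) / 4)) x :=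
    by have := (Real.hasDerivAt_log hαpos.ne').comp x hα; exact this
  have hlogβ : HasDerivAt (fun t : ℝ => Real.log (1 + t * y - Fcal t y / 4))
      ((1 + x * y - Fcal x y / 4)⁻¹ *
        (y - 2 * (a - b) ^ 1 * (1 / (2 * a) * (1 + r) ^ 2 - 1 / (2 * b) * (1 - r) ^ 2) / 4)) x :=
    by have := (Real.hasDerivAt_log hβpos.ne').comp x hβ; exact this
  have hden : HasDerivAt (fun t : ℝ => 4 * t) (4 : ℝ) x := by
    simpa using (hasDerivAt_id x).const_mul (4 : ℝ)
  have hC : HasDerivAt (fun t : ℝ => Fcal t y / (4 * t))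
      ((2 * (a - b) ^ 1 * (1 / (2 * a) * (1 + r) ^ 2 - 1 / (2 * b) * (1 - r) ^ 2) * (4 * x)
        - Fcal x y * 4) / (4 * x) ^ 2) x :=
    hF.div hden (by positivity)
  have hG : HasDerivAt (Gfun y)
      (y * ((1 + x - Fcal x y / 4)⁻¹ *
          (1 - 2 * (a - b) ^ 1 * (1 / (2 * a) * (1 + r) ^ 2 - 1 / (2 * b) * (1 - r) ^ 2) / 4))
        + (1 + x * y - Fcal x y / 4)⁻¹ *
          (y - 2 * (a - b) ^ 1 * (1 / (2 * a) * (1 + r) ^ 2 - 1 / (2 * b) * (1 - r) ^ 2) / 4)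
        - (2 * (a - b) ^ 1 * (1 / (2 * a) * (1 + r) ^ 2 - 1 / (2 * b) * (1 - r) ^ 2) * (4 * x)
            - Fcal x y * 4) / (4 * x) ^ 2) x := by
    unfold Gfun
    exact ((hlogα.const_mul y).add hlogβ).sub hC
  have hFc : Fcal x y = (a - b) ^ 2 := rfl
  have hkey : (y * ((1 + x - Fcal x y / 4)⁻¹ *
          (1 - 2 * (a - b) ^ 1 * (1 / (2 * a) * (1 + r) ^ 2 - 1 / (2 * b) * (1 - r) ^ 2) / 4))
        + (1 + x * y - Fcal x y / 4)⁻¹ *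
          (y - 2 * (a - b) ^ 1 * (1 / (2 * a) * (1 + r) ^ 2 - 1 / (2 * b) * (1 - r) ^ 2) / 4)
        - (2 * (a - b) ^ 1 * (1 / (2 * a) * (1 + r) ^ 2 - 1 / (2 * b) * (1 - r) ^ 2) * (4 * x)
            - Fcal x y * 4) / (4 * x) ^ 2)
      = y / ((1 + x - Fcal x y / 4) * (1 + x * y - Fcal x y / 4)) := by
    rw [hFc, ← hry]
    exact key_identity hx ha hb
      (by rw [← hFc]; exact hαpos.ne') (by rw [hry, ← hFc]; exact hβpos.ne')
      rfl rfl ha2 hb2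
  rw [← hkey]
  exact hG

theorem Phi_mono_fst (y : ℝ) (hy : 0 < y) :
    ∀ x₁ x₂ : ℝ, 0 < x₁ → x₁ ≤ x₂ → Phi x₁ y ≤ Phi x₂ y := by
  intro x₁ x₂ hx₁ hle
  have hx₂ : 0 < x₂ := lt_of_lt_of_le hx₁ hle
  have hmono : StrictMonoOn (Gfun y) (Set.Ioi (0:ℝ)) := by
    apply strictMonoOn_of_hasDerivWithinAt_pos (convex_Ioi 0)
      (f' := fun x => y / ((1 + x - Fcal x y / 4) * (1 + x * y - Fcal x y / 4)))
    · intro x hx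
      exact ((hasDerivAt_G hy hx).differentiableAt.continuousAt).continuousWithinAt
    · intro x hx
      rw [interior_Ioi] at hx
      exact (hasDerivAt_G hy hx).hasDerivWithinAt
    · intro x hx
      rw [interior_Ioi] at hx
      exact div_pos hy (mul_pos (alphaF_pos hy hx) (betaF_pos hy hx))
  have hG : Gfun y x₁ ≤ Gfun y x₂ := by
    rcases eq_or_lt_of_le hle with h | h
    · rw [h]
    · exact (hmono hx₁ hx₂ h).le
  rw [Phi_eq_G, Phi_eq_G]
  gcongr
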